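/- Let d ≥ 1, s ≥ d, and j ≥ 0 be integers. Define wₙ² = (2ⁿ(2d + j) + 1 − 2d)·(2ⁿ(2d + j) + 1 − d) / (2ⁿ(2d + j) + 1 + s − 2d)² for n ∈ ℕ, and set γ₀ = 1, γₙ = ∏_{m=0}^{n−1} w_m² for n ≥ 1. Then there exists a probability measure μ supported in [0,1] such that γₙ = ∫ tⁿ dμ(t) for all n ∈ ℕ. (These are the moments of the shift appearing on the orbit of founder j in the direct sum decomposition of B*_{z^t z̄^s}, with t = s − d ≥ 0, on the Bergman space; hence each such shift, and therefore B*_{z^t z̄^s}, is subnormal, and consequently B_{z^t z̄^s} is not hyponormal.) -/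

import Mathlib

open MeasureTheory

namespace SubnormalAux

/-- Coefficient sequence for the `q`-series with `q = 1/2`. -/
noncomputable def W (c g : ℝ) : ℕ → ℝ
  | 0 => 1
  | k + 1 => (c - g * (2⁻¹ : ℝ) ^ k) / (1 - (2⁻¹ : ℝ) ^ (k + 1)) * W c g k

lemma half_pow_pos (k : ℕ) : (0:ℝ) < (2⁻¹ : ℝ) ^ k := by positivity

lemma half_pow_le_one (k : ℕ) : ((2⁻¹ : ℝ)) ^ k ≤ 1 :=
  pow_le_one₀ (by norm_num) (by norm_num)

lemma one_sub_half_pow_pos (k : ℕ) : (0:ℝ) < 1 - (2⁻¹ : ℝ) ^ (k + 1) := by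
  have : ((2⁻¹ : ℝ)) ^ (k+1) < 1 := pow_lt_one₀ (by norm_num) (by norm_num) k.succ_ne_zero
  linarith

variable {c g : ℝ}

lemma g_mul_lt (hc1 : c < 1) (hgc : g ≤ c) (k : ℕ) : g * (2⁻¹:ℝ) ^ k < 1 := by
  rcases le_or_gt g 0 with h | h
  · have : g * (2⁻¹:ℝ) ^ k ≤ 0 := mul_nonpos_of_nonpos_of_nonneg h (half_pow_pos k).le
    linarith
  · have := mul_le_of_le_one_right h.le (half_pow_le_one k)
    linarith

lemma num_nonneg (hc0 : 0 ≤ c) (hgc : g ≤ c) (k : ℕ) : 0 ≤ c - g * (2⁻¹:ℝ) ^ k := by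
  rcases le_or_gt g 0 with h | h
  · have : g * (2⁻¹:ℝ) ^ k ≤ 0 := mul_nonpos_of_nonpos_of_nonneg h (half_pow_pos k).le
    linarith
  · have := mul_le_of_le_one_right h.le (half_pow_le_one k)
    linarith

lemma W_nonneg (hc0 : 0 ≤ c) (hgc : g ≤ c) : ∀ k, 0 ≤ W c g k := by
  intro k
  induction k with
  | zero => norm_num [W]
  | succ k ih =>
    exact mul_nonneg (div_nonneg (num_nonneg hc0 hgc k) (one_sub_half_pow_pos k).le) ih

lemma W_rec (k : ℕ) :
    W c g (k + 1) * (1 - (2⁻¹:ℝ) ^ (k + 1)) = (c - g * (2⁻¹:ℝ) ^ k) * W c g k := by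
  have h := (one_sub_half_pow_pos k).ne'
  show (c - g * (2⁻¹ : ℝ) ^ k) / (1 - (2⁻¹ : ℝ) ^ (k + 1)) * W c g k *
      (1 - (2⁻¹:ℝ) ^ (k + 1)) = _
  rw [mul_right_comm, div_mul_cancel₀ _ h]

lemma summable_W (hc0 : 0 ≤ c) (hc1 : c < 1) (hgc : g ≤ c) : Summable (W c g) := by
  refine summable_of_ratio_norm_eventually_le (r := (1 + c) / 2) (by linarith) ?_
  have h1 : Filter.Tendsto (fun k : ℕ => (c - g * (2⁻¹:ℝ) ^ k)) Filter.atTop (nhds c) := by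
    have := (tendsto_pow_atTop_nhds_zero_of_lt_one (by norm_num : (0:ℝ) ≤ 2⁻¹)
      (by norm_num : (2⁻¹:ℝ) < 1)).const_mul g
    simpa using (tendsto_const_nhds.sub this)
  have h2 : Filter.Tendsto (fun k : ℕ => (1 - (2⁻¹:ℝ) ^ (k + 1))) Filter.atTop (nhds 1) := by
    have := ((tendsto_pow_atTop_nhds_zero_of_lt_one (by norm_num : (0:ℝ) ≤ 2⁻¹)
      (by norm_num : (2⁻¹:ℝ) < 1)).comp (Filter.tendsto_add_atTop_nat 1))
    simpa using (tendsto_const_nhds.sub this)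
  have h3 : Filter.Tendsto
      (fun k : ℕ => (c - g * (2⁻¹:ℝ) ^ k) / (1 - (2⁻¹:ℝ) ^ (k + 1)))
      Filter.atTop (nhds c) := by
    have := h1.div h2 (by norm_num); rw [div_one] at this; exact this
  filter_upwards [h3.eventually_le_const (by linarith : c < (1 + c) / 2)] with k hk
  have hW := W_nonneg hc0 hgc k
  have hW1 : W c g (k+1) = (c - g * (2⁻¹:ℝ) ^ k) / (1 - (2⁻¹:ℝ) ^ (k + 1)) * W c g k := rfl
  have hratio : 0 ≤ (c - g * (2⁻¹:ℝ) ^ k) / (1 - (2⁻¹:ℝ) ^ (k + 1)) :=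
    div_nonneg (num_nonneg hc0 hgc k) (one_sub_half_pow_pos k).le
  rw [Real.norm_of_nonneg (W_nonneg hc0 hgc (k+1)), Real.norm_of_nonneg hW, hW1]
  exact mul_le_mul_of_nonneg_right hk hW

lemma summable_W_pow (hc0 : 0 ≤ c) (hc1 : c < 1) (hgc : g ≤ c) {x : ℝ}
    (hx0 : 0 ≤ x) (hx1 : x ≤ 1) : Summable (fun k => W c g k * x ^ k) := by
  refine (summable_W hc0 hc1 hgc).of_nonneg_of_le
    (fun k => mul_nonneg (W_nonneg hc0 hgc k) (by positivity)) (fun k => ?_)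
  exact mul_le_of_le_one_right (W_nonneg hc0 hgc k) (pow_le_one₀ hx0 hx1)

/-- The generating function. -/
noncomputable def WS (c g x : ℝ) : ℝ := ∑' k, W c g k * x ^ k

lemma WS_one_ge (hc0 : 0 ≤ c) (hc1 : c < 1) (hgc : g ≤ c) : 1 ≤ WS c g 1 := by
  have h := Summable.le_tsum (summable_W_pow hc0 hc1 hgc zero_le_one le_rfl) 0
    (fun j _ => mul_nonneg (W_nonneg hc0 hgc j) (by positivity))
  simpa [WS, W] using h

lemma WS_funceq (hc0 : 0 ≤ c) (hc1 : c < 1) (hgc : g ≤ c) {x : ℝ}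
    (hx0 : 0 ≤ x) (hx1 : x ≤ 1) :
    (1 - c * x) * WS c g x = (1 - g * x) * WS c g (2⁻¹ * x) := by
  have hx0' : 0 ≤ 2⁻¹ * x := by linarith
  have hx1' : 2⁻¹ * x ≤ 1 := by linarith
  have hA : Summable (fun k => W c g k * x ^ k) := summable_W_pow hc0 hc1 hgc hx0 hx1
  have hC : Summable (fun k => W c g k * ((2⁻¹:ℝ) ^ k * x ^ k)) := by
    refine (summable_W_pow hc0 hc1 hgc hx0' hx1').congr fun k => ?_
    rw [mul_pow]
  have hB : Summable (fun k => (c * W c g k) * x ^ (k + 1)) := by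
    refine (hA.mul_left (c * x)).congr fun k => ?_
    ring
  have hD : Summable (fun k => (g * W c g k) * ((2⁻¹:ℝ) ^ k * x ^ (k + 1))) := by
    refine (hC.mul_left (g * x)).congr fun k => ?_
    ring
  have hK : Summable (fun k => W c g k * (1 - (2⁻¹:ℝ) ^ k) * x ^ k) := by
    refine (summable_W hc0 hc1 hgc).of_nonneg_of_le (fun k => ?_) (fun k => ?_)
    · have h1 : (0:ℝ) ≤ 1 - (2⁻¹:ℝ) ^ k := by
        have := half_pow_le_one k; linarith
      have := W_nonneg hc0 hgc k
      positivity
    · have h1 : (1 - (2⁻¹:ℝ) ^ k) * x ^ k ≤ 1 := by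
        have h2 : (0:ℝ) ≤ 1 - (2⁻¹:ℝ) ^ k := by have := half_pow_le_one k; linarith
        have h3 : x ^ k ≤ 1 := pow_le_one₀ hx0 hx1
        have h4 : (0:ℝ) ≤ x ^ k := by positivity
        calc (1 - (2⁻¹:ℝ) ^ k) * x ^ k ≤ 1 * 1 :=
          mul_le_mul (by linarith [half_pow_pos k]) h3 h4 zero_le_one
        _ = 1 := mul_one 1
      have := W_nonneg hc0 hgc k
      calc W c g k * (1 - (2⁻¹:ℝ) ^ k) * x ^ k
          = W c g k * ((1 - (2⁻¹:ℝ) ^ k) * x ^ k) := by ring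
        _ ≤ W c g k * 1 := by
            apply mul_le_mul_of_nonneg_left h1 this
        _ = W c g k := mul_one _
  -- key identity
  have key : ∑' k, W c g k * (1 - (2⁻¹:ℝ) ^ k) * x ^ k
      = ∑' k, (c - g * (2⁻¹:ℝ) ^ k) * W c g k * x ^ (k + 1) := by
    rw [Summable.tsum_eq_zero_add hK]
    have h0 : W c g 0 * (1 - (2⁻¹:ℝ) ^ 0) * x ^ 0 = 0 := by norm_num [W]
    rw [h0, zero_add]
    refine tsum_congr fun k => ?_
    have := W_rec (c := c) (g := g) k
    calc W c g (k+1) * (1 - (2⁻¹:ℝ) ^ (k+1)) * x ^ (k+1)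
        = (W c g (k+1) * (1 - (2⁻¹:ℝ) ^ (k+1))) * x ^ (k+1) := by ring
      _ = (c - g * (2⁻¹:ℝ) ^ k) * W c g k * x ^ (k+1) := by rw [this]
  have e1 : (1 - c * x) * WS c g x
      = (∑' k, W c g k * x ^ k) - ∑' k, (c * W c g k) * x ^ (k + 1) := by
    rw [sub_mul, one_mul, WS]
    congr 1
    rw [← tsum_mul_left]
    exact tsum_congr fun k => by ring
  have e2 : (1 - g * x) * WS c g (2⁻¹ * x)
      = (∑' k, W c g k * ((2⁻¹:ℝ) ^ k * x ^ k))
        - ∑' k, (g * W c g k) * ((2⁻¹:ℝ) ^ k * x ^ (k + 1)) := by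
    rw [sub_mul, one_mul, WS]
    congr 1
    · exact tsum_congr fun k => by rw [mul_pow]
    · rw [← tsum_mul_left]
      refine tsum_congr fun k => ?_
      rw [mul_pow]
      ring
  have main : (∑' k, W c g k * x ^ k) - (∑' k, W c g k * ((2⁻¹:ℝ) ^ k * x ^ k))
      = (∑' k, (c * W c g k) * x ^ (k + 1))
        - ∑' k, (g * W c g k) * ((2⁻¹:ℝ) ^ k * x ^ (k + 1)) := by
    rw [← Summable.tsum_sub hA hC, ← Summable.tsum_sub hB hD]
    rw [show (fun k => W c g k * x ^ k - W c g k * ((2⁻¹:ℝ) ^ k * x ^ k))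
        = fun k => W c g k * (1 - (2⁻¹:ℝ) ^ k) * x ^ k from funext fun k => by ring]
    rw [key]
    exact tsum_congr fun k => by ring
  rw [e1, e2]
  linarith [main]

lemma one_sub_g_pos (hc1 : c < 1) (hgc : g ≤ c) (k : ℕ) : 0 < 1 - g * (2⁻¹:ℝ) ^ k := by
  have := g_mul_lt hc1 hgc k
  linarith

lemma WS_pow (hc0 : 0 ≤ c) (hc1 : c < 1) (hgc : g ≤ c) (n : ℕ) :
    WS c g ((2⁻¹:ℝ) ^ n) = WS c g 1 *
      ∏ m ∈ Finset.range n, ((1 - c * (2⁻¹:ℝ) ^ m) / (1 - g * (2⁻¹:ℝ) ^ m)) := by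
  induction n with
  | zero => simp
  | succ n ih =>
    have hfe := WS_funceq hc0 hc1 hgc (half_pow_pos n).le (half_pow_le_one n)
    have hgn := (one_sub_g_pos hc1 hgc n).ne'
    have hq : (2⁻¹:ℝ) * (2⁻¹:ℝ) ^ n = (2⁻¹:ℝ) ^ (n + 1) := (pow_succ' _ _).symm
    rw [hq] at hfe
    have : WS c g ((2⁻¹:ℝ) ^ (n+1))
        = WS c g ((2⁻¹:ℝ) ^ n) * ((1 - c * (2⁻¹:ℝ) ^ n) / (1 - g * (2⁻¹:ℝ) ^ n)) := by
      rw [← mul_div_assoc, eq_div_iff hgn]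
      linear_combination -hfe
    rw [this, ih, Finset.prod_range_succ]
    ring

lemma tsum_prod_mul {a b : ℕ → ℝ} (ha : Summable a) (hb : Summable b)
    (ha0 : ∀ i, 0 ≤ a i) (hb0 : ∀ i, 0 ≤ b i) :
    ∑' ik : ℕ × ℕ, a ik.1 * b ik.2 = (∑' i, a i) * (∑' i, b i) := by
  rw [Summable.tsum_prod' (Summable.mul_of_nonneg ha hb ha0 hb0) (fun i => hb.mul_left (a i))]
  calc ∑' i, ∑' k, a i * b k = ∑' i, a i * ∑' k, b k := tsum_congr fun i => tsum_mul_left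
    _ = _ := tsum_mul_right

end SubnormalAux

open SubnormalAux

set_option maxHeartbeats 1000000 in
/-- Let `d ≥ 1`, `s ≥ d`, `j ≥ 0`, and let
`wₙ² = (2ⁿ(2d+j)+1−2d)(2ⁿ(2d+j)+1−d)/(2ⁿ(2d+j)+1+s−2d)²` with moments
`γₙ = ∏_{m<n} w_m²`.  Then the `γₙ` are the moments of a probability measure supported in
`[0,1]`.  These are the moments of the shift on the orbit of founder `j` in the direct sum
decomposition of `B*_{zᵗ z̄ˢ}` (`t = s − d ≥ 0`) on the Bergman space; hence each such
shift, and therefore `B*_{zᵗ z̄ˢ}`, is subnormal, and `B_{zᵗ z̄ˢ}` is not hyponormal. -/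
theorem subnormal_shift_general_case (d s j : ℤ) (hd : 1 ≤ d) (hds : d ≤ s) (hj : 0 ≤ j) :
    ∃ μ : Measure ℝ, IsProbabilityMeasure μ ∧ μ (Set.Icc (0 : ℝ) 1)ᶜ = 0 ∧
      ∀ n : ℕ, ∫ t, t ^ n ∂μ =
        ∏ m ∈ Finset.range n,
          (((2 : ℝ) ^ m * (2 * (d : ℝ) + (j : ℝ)) + 1 - 2 * (d : ℝ)) *
              ((2 : ℝ) ^ m * (2 * (d : ℝ) + (j : ℝ)) + 1 - (d : ℝ)) /
            ((2 : ℝ) ^ m * (2 * (d : ℝ) + (j : ℝ)) + 1 + (s : ℝ) - 2 * (d : ℝ)) ^ 2) := by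
  have hd' : (1:ℝ) ≤ (d:ℝ) := by exact_mod_cast hd
  have hs' : (d:ℝ) ≤ (s:ℝ) := by exact_mod_cast hds
  have hj' : (0:ℝ) ≤ (j:ℝ) := by exact_mod_cast hj
  set K : ℝ := 2 * (d:ℝ) + (j:ℝ) with hK
  clear_value K
  have hK0 : 0 < K := by simp only [hK]; linarith
  set α : ℝ := (2 * (d:ℝ) - 1) / K with hα
  set β : ℝ := ((d:ℝ) - 1) / K with hβ
  set g : ℝ := (2 * (d:ℝ) - 1 - (s:ℝ)) / K with hg
  clear_value α β g
  have hα0 : 0 ≤ α := by rw [hα]; exact div_nonneg (by linarith) hK0.le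
  have hα1 : α < 1 := by rw [hα]; exact (div_lt_one hK0).2 (by simp only [hK]; linarith)
  have hβ0 : 0 ≤ β := by rw [hβ]; exact div_nonneg (by linarith) hK0.le
  have hβ1 : β < 1 := by rw [hβ]; exact (div_lt_one hK0).2 (by simp only [hK]; linarith)
  have hgα : g ≤ α := by
    rw [hg, hα, div_le_div_iff₀ hK0 hK0]
    nlinarith
  have hgβ : g ≤ β := by
    rw [hg, hβ, div_le_div_iff₀ hK0 hK0]
    nlinarith
  have hg1 : g < 1 := lt_of_le_of_lt hgβ hβ1
  set SA : ℝ := WS α g 1 with hSA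
  set SB : ℝ := WS β g 1 with hSB
  clear_value SA SB
  have hSA1 : 1 ≤ SA := by rw [hSA]; exact WS_one_ge hα0 hα1 hgα
  have hSB1 : 1 ≤ SB := by rw [hSB]; exact WS_one_ge hβ0 hβ1 hgβ
  have hSA0 : SA ≠ 0 := by linarith
  have hSB0 : SB ≠ 0 := by linarith
  set p : ℕ × ℕ → ℝ := fun ik => (W α g ik.1 / SA) * (W β g ik.2 / SB) with hp
  clear_value p
  have hpA0 : ∀ i, 0 ≤ W α g i / SA := fun i =>
    div_nonneg (W_nonneg hα0 hgα i) (by linarith)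
  have hpB0 : ∀ i, 0 ≤ W β g i / SB := fun i =>
    div_nonneg (W_nonneg hβ0 hgβ i) (by linarith)
  have hp0 : ∀ ik, 0 ≤ p ik := fun ik => by
    simp only [hp]; exact mul_nonneg (hpA0 ik.1) (hpB0 ik.2)
  have hsumA : Summable (fun i => W α g i / SA) := (summable_W hα0 hα1 hgα).div_const _
  have hsumB : Summable (fun i => W β g i / SB) := (summable_W hβ0 hβ1 hgβ).div_const _
  have hpsum : Summable p := by
    rw [hp]; exact Summable.mul_of_nonneg hsumA hsumB hpA0 hpB0
  have hWS1A : SA = ∑' k, W α g k := by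
    rw [hSA, WS]; exact tsum_congr fun k => by simp
  have hWS1B : SB = ∑' k, W β g k := by
    rw [hSB, WS]; exact tsum_congr fun k => by simp
  have hptotA : ∑' i, W α g i / SA = 1 := by
    rw [tsum_div_const, ← hWS1A, div_self hSA0]
  have hptotB : ∑' i, W β g i / SB = 1 := by
    rw [tsum_div_const, ← hWS1B, div_self hSB0]
  have hptot : ∑' ik, p ik = 1 := by
    simp only [hp]
    rw [tsum_prod_mul hsumA hsumB hpA0 hpB0, hptotA, hptotB, mul_one]
  set μ0 : Measure ℝ := Measure.sum
    (fun ik : ℕ × ℕ => ENNReal.ofReal (p ik) • Measure.dirac ((2:ℝ)⁻¹ ^ (ik.1 + ik.2)))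
    with hμ0
  clear_value μ0
  have hmem : ∀ m : ℕ, (2:ℝ)⁻¹ ^ m ∈ Set.Icc (0:ℝ) 1 :=
    fun m => ⟨(half_pow_pos m).le, half_pow_le_one m⟩
  have hprob : IsProbabilityMeasure μ0 := by
    constructor
    rw [hμ0, Measure.sum_apply _ MeasurableSet.univ]
    have h1 : ∀ ik : ℕ × ℕ,
        (ENNReal.ofReal (p ik) • Measure.dirac ((2:ℝ)⁻¹ ^ (ik.1 + ik.2))) Set.univ
          = ENNReal.ofReal (p ik) := by
      intro ik; simp
    rw [tsum_congr h1, ← ENNReal.ofReal_tsum_of_nonneg hp0 hpsum, hptot, ENNReal.ofReal_one]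
  have hnull : μ0 (Set.Icc (0 : ℝ) 1)ᶜ = 0 := by
    rw [hμ0, Measure.sum_apply _ measurableSet_Icc.compl]
    have h1 : ∀ ik : ℕ × ℕ,
        (ENNReal.ofReal (p ik) • Measure.dirac ((2:ℝ)⁻¹ ^ (ik.1 + ik.2)))
          (Set.Icc (0 : ℝ) 1)ᶜ = 0 := by
      intro ik
      rw [Measure.smul_apply, Measure.dirac_apply' _ measurableSet_Icc.compl,
        Set.indicator_of_notMem (Set.notMem_compl_iff.mpr (hmem _))]
      simp
    rw [tsum_congr h1, tsum_zero]
  refine ⟨μ0, hprob, hnull, fun n => ?_⟩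
  have hae : ∀ᵐ t ∂μ0, t ∈ Set.Icc (0:ℝ) 1 := by
    rw [ae_iff]
    simpa [Set.compl_def] using hnull
  haveI := hprob
  have hint : Integrable (fun t : ℝ => t ^ n) μ0 := by
    refine ⟨(continuous_pow n).aestronglyMeasurable, HasFiniteIntegral.of_bounded (C := 1) ?_⟩
    filter_upwards [hae] with t ht
    rw [Real.norm_of_nonneg (pow_nonneg ht.1 n)]
    exact pow_le_one₀ ht.1 ht.2
  set x : ℝ := (2⁻¹:ℝ) ^ n with hx
  clear_value x
  have hx0 : (0:ℝ) ≤ x := by rw [hx]; exact (half_pow_pos n).le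
  have hx1 : x ≤ 1 := by rw [hx]; exact half_pow_le_one n
  have hsA : Summable (fun i => W α g i * x ^ i / SA) :=
    (summable_W_pow hα0 hα1 hgα hx0 hx1).div_const _
  have hsB : Summable (fun i => W β g i * x ^ i / SB) :=
    (summable_W_pow hβ0 hβ1 hgβ hx0 hx1).div_const _
  have hsA0 : ∀ i, 0 ≤ W α g i * x ^ i / SA := fun i =>
    div_nonneg (mul_nonneg (W_nonneg hα0 hgα i) (by positivity)) (by linarith)
  have hsB0 : ∀ i, 0 ≤ W β g i * x ^ i / SB := fun i =>
    div_nonneg (mul_nonneg (W_nonneg hβ0 hgβ i) (by positivity)) (by linarith)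
  have hprod : Summable (fun ik : ℕ × ℕ =>
      (W α g ik.1 * x ^ ik.1 / SA) * (W β g ik.2 * x ^ ik.2 / SB)) :=
    Summable.mul_of_nonneg hsA hsB hsA0 hsB0
  have step1 : ∫ t, t ^ n ∂μ0
      = ∑' ik : ℕ × ℕ, (W α g ik.1 * x ^ ik.1 / SA) * (W β g ik.2 * x ^ ik.2 / SB) := by
    rw [hμ0] at hint ⊢
    rw [integral_sum_measure hint]
    refine tsum_congr fun ik => ?_
    rw [integral_smul_measure, integral_dirac, ENNReal.toReal_ofReal (hp0 ik), smul_eq_mul]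
    simp only [hp, hx]
    ring
  have step2 : ∑' ik : ℕ × ℕ, (W α g ik.1 * x ^ ik.1 / SA) * (W β g ik.2 * x ^ ik.2 / SB)
      = (WS α g x / SA) * (WS β g x / SB) := by
    rw [tsum_prod_mul hsA hsB hsA0 hsB0, tsum_div_const, tsum_div_const]
    rfl
  have hPA := WS_pow hα0 hα1 hgα n
  have hPB := WS_pow hβ0 hβ1 hgβ n
  rw [step1, step2, hx, hPA, hPB, ← hSA, ← hSB]
  rw [show SA * (∏ m ∈ Finset.range n, (1 - α * (2⁻¹:ℝ) ^ m) / (1 - g * (2⁻¹:ℝ) ^ m)) / SA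
      = ∏ m ∈ Finset.range n, (1 - α * (2⁻¹:ℝ) ^ m) / (1 - g * (2⁻¹:ℝ) ^ m) from by
    rw [mul_comm, mul_div_assoc, div_self hSA0, mul_one]]
  rw [show SB * (∏ m ∈ Finset.range n, (1 - β * (2⁻¹:ℝ) ^ m) / (1 - g * (2⁻¹:ℝ) ^ m)) / SB
      = ∏ m ∈ Finset.range n, (1 - β * (2⁻¹:ℝ) ^ m) / (1 - g * (2⁻¹:ℝ) ^ m) from by
    rw [mul_comm, mul_div_assoc, div_self hSB0, mul_one]]
  rw [← Finset.prod_mul_distrib]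
  refine Finset.prod_congr rfl fun m _ => ?_
  have hm2 : (2:ℝ) ^ m * (2⁻¹:ℝ) ^ m = 1 := by
    rw [← mul_pow]; norm_num
  have hgm : (0:ℝ) < 1 - g * (2⁻¹:ℝ) ^ m := one_sub_g_pos hα1 hgα m
  have hαK : α * K = 2 * (d:ℝ) - 1 := by rw [hα]; field_simp
  have hβK : β * K = (d:ℝ) - 1 := by rw [hβ]; field_simp
  have hgK : g * K = 2 * (d:ℝ) - 1 - (s:ℝ) := by rw [hg]; field_simp
  have e1 : (2:ℝ) ^ m * K + 1 - 2 * (d:ℝ) = 2 ^ m * K * (1 - α * (2⁻¹:ℝ) ^ m) := by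
    linear_combination (2:ℝ) ^ m * (2⁻¹:ℝ) ^ m * hαK + (2 * (d:ℝ) - 1) * hm2
  have e2 : (2:ℝ) ^ m * K + 1 - (d:ℝ) = 2 ^ m * K * (1 - β * (2⁻¹:ℝ) ^ m) := by
    linear_combination (2:ℝ) ^ m * (2⁻¹:ℝ) ^ m * hβK + ((d:ℝ) - 1) * hm2
  have e3 : (2:ℝ) ^ m * K + 1 + (s:ℝ) - 2 * (d:ℝ) = 2 ^ m * K * (1 - g * (2⁻¹:ℝ) ^ m) := by
    linear_combination (2:ℝ) ^ m * (2⁻¹:ℝ) ^ m * hgK + (2 * (d:ℝ) - 1 - (s:ℝ)) * hm2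
  rw [e1, e2, e3]
  have hpm : ((2:ℝ) ^ m * K) ≠ 0 := by positivity
  rw [div_mul_div_comm, mul_pow,
    show (2:ℝ) ^ m * K * (1 - α * (2⁻¹:ℝ) ^ m) * (2 ^ m * K * (1 - β * (2⁻¹:ℝ) ^ m))
      = ((2:ℝ) ^ m * K) ^ 2 * ((1 - α * (2⁻¹:ℝ) ^ m) * (1 - β * (2⁻¹:ℝ) ^ m)) from by ring,
    mul_div_mul_left _ _ (pow_ne_zero 2 hpm), ← sq]
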